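/- Let A and B be positive invertible operators with mI ≤ A ≤ MI and mI ≤ B ≤ MI for scalars 0 < m ≤ M, and let α, β ∈ [0,1]. Then λ^{-1}(A ∇_α B) ≤ A ♯_β B ≤ λ (A !_α B), where λ = max{(1-α)(m/M)^β + α(M/m)^{1-β}, (1-α)(M/m)^β + α(m/M)^{1-β}}. -/

import Mathlib

open scoped ComplexOrder

namespace SandwichAux
open Matrix

variable {N : Type*} [Fintype N] [DecidableEq N] {A : Matrix N N ℂ}

lemma star_dot_self (hA : A.IsHermitian) (i : N) :
    star (⇑(hA.eigenvectorBasis i)) ⬝ᵥ ⇑(hA.eigenvectorBasis i) = 1 := by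
  rw [dotProduct_comm, ← EuclideanSpace.inner_eq_star_dotProduct, inner_self_eq_norm_sq_to_K,
    hA.eigenvectorBasis.orthonormal.1 i]
  norm_num

lemma le_eig (hA : A.IsHermitian) {c : ℝ}
    (hc : (A - c • (1 : Matrix N N ℂ)).PosSemidef) (i : N) : c ≤ hA.eigenvalues i := by
  have h1 := hc.re_dotProduct_nonneg (⇑(hA.eigenvectorBasis i))
  rw [sub_mulVec] at h1
  simp only [dotProduct_sub] at h1
  rw [smul_mulVec, one_mulVec, dotProduct_smul, star_dot_self hA i] at h1
  simp only [map_sub] at h1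
  rw [← hA.eigenvalues_eq i] at h1
  simpa using h1

lemma eig_le (hA : A.IsHermitian) {c : ℝ}
    (hc : (c • (1 : Matrix N N ℂ) - A).PosSemidef) (i : N) : hA.eigenvalues i ≤ c := by
  have h1 := hc.re_dotProduct_nonneg (⇑(hA.eigenvectorBasis i))
  rw [sub_mulVec] at h1
  simp only [dotProduct_sub] at h1
  rw [smul_mulVec, one_mulVec, dotProduct_smul, star_dot_self hA i] at h1
  simp only [map_sub] at h1
  rw [← hA.eigenvalues_eq i] at h1
  simpa using h1

lemma psd_smul {X : Matrix N N ℂ} (hX : X.PosSemidef) {r : ℝ} (hr : 0 ≤ r) :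
    (r • X).PosSemidef := by
  refine Matrix.PosSemidef.of_dotProduct_mulVec_nonneg ?_ ?_
  · show (r • X)ᴴ = r • X
    rw [conjTranspose_smul, star_trivial, hX.1.eq]
  · intro x
    rw [smul_mulVec, dotProduct_smul, Complex.real_smul]
    exact mul_nonneg (Complex.zero_le_real.mpr hr) (hX.dotProduct_mulVec_nonneg x)

lemma mycfc_mul (hA : A.IsHermitian) (f g : ℝ → ℝ) :
    hA.cfc f * hA.cfc g = hA.cfc (fun x => f x * g x) := by
  unfold Matrix.IsHermitian.cfc
  simp only [Unitary.conjStarAlgAut_apply]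
  have h1 : (star (hA.eigenvectorUnitary : Matrix N N ℂ)) *
      (hA.eigenvectorUnitary : Matrix N N ℂ) = 1 := Unitary.coe_star_mul_self _
  rw [show ∀ (a b c d e f : Matrix N N ℂ), (a * b * c) * (d * e * f) = a * (b * (c * d) * e) * f
    from fun a b c d e f => by simp only [mul_assoc]]
  rw [h1, mul_one, diagonal_mul_diagonal]
  have h2 : (fun i => (RCLike.ofReal ∘ f ∘ hA.eigenvalues) i * (RCLike.ofReal ∘ g ∘ hA.eigenvalues) i)
      = (RCLike.ofReal (K := ℂ) ∘ (fun x => f x * g x) ∘ hA.eigenvalues) := by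
    ext i; simp
  rw [h2]

lemma mycfc_add (hA : A.IsHermitian) (f g : ℝ → ℝ) :
    hA.cfc f + hA.cfc g = hA.cfc (fun x => f x + g x) := by
  unfold Matrix.IsHermitian.cfc
  simp only [Unitary.conjStarAlgAut_apply]
  rw [← add_mul, ← mul_add, diagonal_add]
  have h2 : (fun i => (RCLike.ofReal ∘ f ∘ hA.eigenvalues) i + (RCLike.ofReal ∘ g ∘ hA.eigenvalues) i)
      = (RCLike.ofReal (K := ℂ) ∘ (fun x => f x + g x) ∘ hA.eigenvalues) := by
    ext i; simp
  rw [h2]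

lemma mycfc_sub (hA : A.IsHermitian) (f g : ℝ → ℝ) :
    hA.cfc f - hA.cfc g = hA.cfc (fun x => f x - g x) := by
  unfold Matrix.IsHermitian.cfc
  simp only [Unitary.conjStarAlgAut_apply]
  rw [← sub_mul, ← mul_sub, diagonal_sub]
  have h2 : (fun i => (RCLike.ofReal ∘ f ∘ hA.eigenvalues) i - (RCLike.ofReal ∘ g ∘ hA.eigenvalues) i)
      = (RCLike.ofReal (K := ℂ) ∘ (fun x => f x - g x) ∘ hA.eigenvalues) := by
    ext i; simp
  rw [h2]

lemma mycfc_smul (hA : A.IsHermitian) (r : ℝ) (f : ℝ → ℝ) :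
    r • hA.cfc f = hA.cfc (fun x => r * f x) := by
  unfold Matrix.IsHermitian.cfc
  simp only [Unitary.conjStarAlgAut_apply]
  rw [← smul_mul_assoc, ← mul_smul_comm, ← diagonal_smul]
  have h2 : (r • (RCLike.ofReal ∘ f ∘ hA.eigenvalues) : N → ℂ)
      = (RCLike.ofReal (K := ℂ) ∘ (fun x => r * f x) ∘ hA.eigenvalues) := by
    ext i; simp [Complex.real_smul]
  rw [h2]

lemma mycfc_one (hA : A.IsHermitian) : hA.cfc (fun _ => 1) = 1 := by
  unfold Matrix.IsHermitian.cfc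
  simp only [Unitary.conjStarAlgAut_apply]
  have h2 : (RCLike.ofReal (K := ℂ) ∘ (fun _ : ℝ => (1:ℝ)) ∘ hA.eigenvalues) = fun _ => (1:ℂ) := by
    ext i; simp
  rw [h2, diagonal_one, mul_one]
  exact (Matrix.mem_unitaryGroup_iff).mp (hA.eigenvectorUnitary).2

lemma mycfc_congr (hA : A.IsHermitian) {f g : ℝ → ℝ}
    (h : ∀ i, f (hA.eigenvalues i) = g (hA.eigenvalues i)) : hA.cfc f = hA.cfc g := by
  unfold Matrix.IsHermitian.cfc
  simp only [Unitary.conjStarAlgAut_apply]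
  have h2 : (RCLike.ofReal (K := ℂ) ∘ f ∘ hA.eigenvalues)
      = (RCLike.ofReal (K := ℂ) ∘ g ∘ hA.eigenvalues) := by
    ext i; simp [h i]
  rw [h2]

lemma mycfc_id (hA : A.IsHermitian) : hA.cfc (fun x => x) = A := by
  unfold Matrix.IsHermitian.cfc
  simp only [Unitary.conjStarAlgAut_apply]
  exact hA.spectral_theorem.symm

lemma mycfc_psd (hA : A.IsHermitian) {f : ℝ → ℝ}
    (h : ∀ i, 0 ≤ f (hA.eigenvalues i)) : (hA.cfc f).PosSemidef := by
  unfold Matrix.IsHermitian.cfc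
  simp only [Unitary.conjStarAlgAut_apply]
  rw [Matrix.star_eq_conjTranspose]
  exact (posSemidef_diagonal_iff.mpr fun i => Complex.zero_le_real.mpr (h i)
    ).mul_mul_conjTranspose_same _

lemma mycfc_herm (hA : A.IsHermitian) (f : ℝ → ℝ) : (hA.cfc f).IsHermitian := by
  unfold Matrix.IsHermitian.cfc
  simp only [Unitary.conjStarAlgAut_apply]
  rw [Matrix.star_eq_conjTranspose]
  refine isHermitian_mul_mul_conjTranspose _ ?_
  exact isHermitian_diagonal_of_self_adjoint _ (by ext i; simp [Function.comp])

lemma mycfc_inv (hA : A.IsHermitian) {f : ℝ → ℝ}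
    (h : ∀ i, f (hA.eigenvalues i) ≠ 0) :
    (hA.cfc f)⁻¹ = hA.cfc (fun x => (f x)⁻¹) := by
  apply Matrix.inv_eq_right_inv
  rw [mycfc_mul]
  rw [mycfc_congr hA (g := fun _ => 1) (fun i => mul_inv_cancel₀ (h i))]
  exact mycfc_one hA

lemma mycfc_const (hA : A.IsHermitian) (c : ℝ) :
    hA.cfc (fun _ => c) = c • (1 : Matrix N N ℂ) := by
  rw [← mycfc_one hA, mycfc_smul]
  simp

lemma convexOn_exp_mul (c : ℝ) : ConvexOn ℝ Set.univ (fun t : ℝ => Real.exp (t * c)) := by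
  have h := convexOn_exp.comp_affineMap (AffineMap.lineMap (0:ℝ) c)
  simpa [Function.comp_def, AffineMap.lineMap_apply, smul_eq_mul] using h

lemma quasi (α β : ℝ) (hα0 : 0 ≤ α) (hα1 : α ≤ 1) {h H x : ℝ} (hh : 0 < h)
    (hx1 : h ≤ x) (hx2 : x ≤ H) :
    (1-α) * x ^ (-β) + α * x ^ (1-β) ≤
      max ((1-α) * h ^ (-β) + α * h ^ (1-β)) ((1-α) * H ^ (-β) + α * H ^ (1-β)) := by
  have hx : (0:ℝ) < x := hh.trans_le hx1
  have hH : (0:ℝ) < H := hx.trans_le hx2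
  set F : ℝ → ℝ := fun t => (1-α) • Real.exp (t * (-β)) + α • Real.exp (t * (1-β)) with hF
  have hconv : ConvexOn ℝ Set.univ F :=
    ((convexOn_exp_mul (-β)).smul (by linarith)).add ((convexOn_exp_mul (1-β)).smul hα0)
  have key : ∀ y : ℝ, 0 < y → F (Real.log y) = (1-α) * y ^ (-β) + α * y ^ (1-β) := by
    intro y hy
    rw [hF]
    simp only [smul_eq_mul]
    rw [Real.rpow_def_of_pos hy, Real.rpow_def_of_pos hy]
  have hseg : Real.log x ∈ segment ℝ (Real.log h) (Real.log H) := by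
    rw [segment_eq_Icc (Real.log_le_log hh (hx1.trans hx2))]
    exact ⟨Real.log_le_log hh hx1, Real.log_le_log hx hx2⟩
  have hmax := hconv.le_on_segment (Set.mem_univ _) (Set.mem_univ _) hseg
  rw [key x hx, key h hh, key H hH] at hmax
  exact hmax

end SandwichAux

/-- `A ^ r` for a Hermitian matrix, via the continuous functional calculus. -/
noncomputable def mpow {n : ℕ} (A : Matrix (Fin n) (Fin n) ℂ) (r : ℝ) : Matrix (Fin n) (Fin n) ℂ :=
  cfc (fun x : ℝ => x ^ r) A

/-- The β-weighted operator geometric mean `A ♯_β B = A^{1/2}(A^{-1/2} B A^{-1/2})^β A^{1/2}`. -/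
noncomputable def geomMean {n : ℕ} (A B : Matrix (Fin n) (Fin n) ℂ) (β : ℝ) :
    Matrix (Fin n) (Fin n) ℂ :=
  mpow A (1/2) * mpow (mpow A (-(1/2)) * B * mpow A (-(1/2))) β * mpow A (1/2)

/-- The α-weighted operator harmonic mean `A !_α B = ((1-α)A⁻¹ + αB⁻¹)⁻¹`. -/
noncomputable def harmMean {n : ℕ} (A B : Matrix (Fin n) (Fin n) ℂ) (α : ℝ) :
    Matrix (Fin n) (Fin n) ℂ :=
  ((1 - α) • A⁻¹ + α • B⁻¹)⁻¹

open SandwichAux Matrix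

/-- If `mI ≤ A, B ≤ MI`, then `λ⁻¹(A ∇_α B) ≤ A ♯_β B ≤ λ (A !_α B)`. -/
theorem sandwich_means {n : ℕ} (A B : Matrix (Fin n) (Fin n) ℂ) (m M α β : ℝ)
    (hA : A.PosDef) (hB : B.PosDef) (hm : 0 < m) (hmM : m ≤ M)
    (hAm : (A - m • (1 : Matrix (Fin n) (Fin n) ℂ)).PosSemidef)
    (hAM : (M • (1 : Matrix (Fin n) (Fin n) ℂ) - A).PosSemidef)
    (hBm : (B - m • (1 : Matrix (Fin n) (Fin n) ℂ)).PosSemidef)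
    (hBM : (M • (1 : Matrix (Fin n) (Fin n) ℂ) - B).PosSemidef)
    (hα0 : 0 ≤ α) (hα1 : α ≤ 1) (hβ0 : 0 ≤ β) (hβ1 : β ≤ 1) :
    (geomMean A B β -
        (max ((1 - α) * (m / M) ^ β + α * (M / m) ^ (1 - β))
             ((1 - α) * (M / m) ^ β + α * (m / M) ^ (1 - β)))⁻¹
          • ((1 - α) • A + α • B)).PosSemidef ∧
    ((max ((1 - α) * (m / M) ^ β + α * (M / m) ^ (1 - β))
          ((1 - α) * (M / m) ^ β + α * (m / M) ^ (1 - β)))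
        • harmMean A B α - geomMean A B β).PosSemidef := by
  have hM : (0:ℝ) < M := lt_of_lt_of_le hm hmM
  have hA' : A.IsHermitian := hA.1
  have hB' : B.IsHermitian := hB.1
  have hApos : ∀ i, 0 < hA'.eigenvalues i := fun i => hA.eigenvalues_pos i
  set lam := max ((1 - α) * (m / M) ^ β + α * (M / m) ^ (1 - β))
      ((1 - α) * (M / m) ^ β + α * (m / M) ^ (1 - β)) with hlam
  set S := hA'.cfc (fun x : ℝ => x ^ ((1:ℝ)/2)) with hSdef
  set T := hA'.cfc (fun x : ℝ => x ^ (-((1:ℝ)/2))) with hTdef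
  clear_value S T
  -- basic identities
  have hST : S * T = 1 := by
    rw [hSdef, hTdef, mycfc_mul,
      mycfc_congr hA' (g := fun _ => 1) (fun i => by
        rw [← Real.rpow_add (hApos i)]; norm_num), mycfc_one]
  have hTS : T * S = 1 := by
    rw [hSdef, hTdef, mycfc_mul,
      mycfc_congr hA' (g := fun _ => 1) (fun i => by
        rw [← Real.rpow_add (hApos i)]; norm_num), mycfc_one]
  have hSS : S * S = A := by
    rw [hSdef, mycfc_mul,
      mycfc_congr hA' (g := fun x => x) (fun i => by
        rw [← Real.rpow_add (hApos i)]; norm_num), mycfc_id]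
  have hTAT : T * A * T = 1 := by
    conv_lhs => rw [← mycfc_id hA']
    rw [hTdef, mycfc_mul, mycfc_mul,
      mycfc_congr hA' (g := fun _ => 1) (fun i => by
        have h := hApos i
        have h2 : hA'.eigenvalues i ^ (-((1:ℝ)/2)) * hA'.eigenvalues i
            = hA'.eigenvalues i ^ ((1:ℝ)/2) := by
          nth_rewrite 2 [← Real.rpow_one (hA'.eigenvalues i)]
          rw [← Real.rpow_add h]
          norm_num
        rw [h2, ← Real.rpow_add h]
        norm_num), mycfc_one]
  have hAinv : A⁻¹ = T * T := by
    apply Matrix.inv_eq_right_inv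
    have hfun : ∀ i, hA'.eigenvalues i * hA'.eigenvalues i ^ (-((1:ℝ)/2))
        * hA'.eigenvalues i ^ (-((1:ℝ)/2)) = 1 := by
      intro i
      have h := hApos i
      have h2 : hA'.eigenvalues i * hA'.eigenvalues i ^ (-((1:ℝ)/2))
          = hA'.eigenvalues i ^ ((1:ℝ)/2) := by
        nth_rewrite 1 [← Real.rpow_one (hA'.eigenvalues i)]
        rw [← Real.rpow_add h]; norm_num
      rw [h2, ← Real.rpow_add h]; norm_num
    conv_lhs => rw [← mycfc_id hA']
    rw [hTdef, ← mul_assoc, mycfc_mul, mycfc_mul,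
      mycfc_congr hA' (g := fun _ => 1) hfun, mycfc_one]
  -- the conjugated matrix C
  set C := T * B * T with hCdef
  clear_value C
  have hTh : T.IsHermitian := by rw [hTdef]; exact mycfc_herm hA' _
  have hSh : S.IsHermitian := by rw [hSdef]; exact mycfc_herm hA' _
  have hC : C.IsHermitian := by
    have h := Matrix.isHermitian_mul_mul_conjTranspose T hB'
    rwa [hTh.eq, ← hCdef] at h
  -- eigenvalue bounds for C
  have hh : (0:ℝ) < m / M := div_pos hm hM
  have hCl : ∀ i, m / M ≤ hC.eigenvalues i := by
    apply le_eig hC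
    have hpsd : (B - (m/M) • A).PosSemidef := by
      have heq : B - (m/M) • A
          = (B - m • (1 : Matrix (Fin n) (Fin n) ℂ))
            + (m/M) • (M • (1 : Matrix (Fin n) (Fin n) ℂ) - A) := by
        rw [smul_sub, smul_smul, div_mul_cancel₀ _ hM.ne']
        abel
      rw [heq]
      exact hBm.add (psd_smul hAM (le_of_lt hh))
    have heq2 : C - (m/M) • (1 : Matrix (Fin n) (Fin n) ℂ) = T * (B - (m/M) • A) * Tᴴ := by
      rw [hTh.eq, mul_sub, sub_mul, mul_smul_comm, smul_mul_assoc, hTAT, hCdef]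
    rw [heq2]
    exact hpsd.mul_mul_conjTranspose_same T
  have hCu : ∀ i, hC.eigenvalues i ≤ M / m := by
    apply eig_le hC
    have hpsd : ((M/m) • A - B).PosSemidef := by
      have heq : (M/m) • A - B
          = (M/m) • (A - m • (1 : Matrix (Fin n) (Fin n) ℂ))
            + (M • (1 : Matrix (Fin n) (Fin n) ℂ) - B) := by
        rw [smul_sub, smul_smul, div_mul_cancel₀ _ hm.ne']
        abel
      rw [heq]
      exact (psd_smul hAm (le_of_lt (div_pos hM hm))).add hBM
    have heq2 : (M/m) • (1 : Matrix (Fin n) (Fin n) ℂ) - C = T * ((M/m) • A - B) * Tᴴ := by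
      rw [hTh.eq, mul_sub, sub_mul, mul_smul_comm, smul_mul_assoc, hTAT, hCdef]
    rw [heq2]
    exact hpsd.mul_mul_conjTranspose_same T
  have hCpos : ∀ i, 0 < hC.eigenvalues i := fun i => lt_of_lt_of_le hh (hCl i)
  -- more identities
  have hSCS : S * C * S = B := by
    rw [hCdef, show S * (T * B * T) * S = (S * T) * B * (T * S) from by noncomm_ring,
      hST, hTS, one_mul, mul_one]
  have hCCinv : C * hC.cfc (fun x => x⁻¹) = 1 := by
    have h1 : hC.cfc (fun x => x) * hC.cfc (fun x => x⁻¹) = 1 := by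
      rw [mycfc_mul, mycfc_congr hC (g := fun _ => 1)
        (fun i => mul_inv_cancel₀ (hCpos i).ne'), mycfc_one]
    rwa [mycfc_id hC] at h1
  have hBinv : B⁻¹ = T * hC.cfc (fun x => x⁻¹) * T := by
    apply Matrix.inv_eq_right_inv
    rw [← hSCS, show S * C * S * (T * hC.cfc (fun x => x⁻¹) * T)
        = S * (C * ((S * T) * hC.cfc fun x => x⁻¹)) * T from by noncomm_ring,
      hST, one_mul, hCCinv, mul_one, hST]
  -- scalar bound machinery
  have hlam' : lam = max ((1-α) * (m/M) ^ (-β) + α * (m/M) ^ (1-β))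
      ((1-α) * (M/m) ^ (-β) + α * (M/m) ^ (1-β)) := by
    have e1 : (m/M:ℝ) ^ β = (M/m) ^ (-β) := by
      rw [Real.rpow_neg (by positivity), ← Real.inv_rpow (by positivity), inv_div]
    have e2 : (M/m:ℝ) ^ β = (m/M) ^ (-β) := by
      rw [Real.rpow_neg (by positivity), ← Real.inv_rpow (by positivity), inv_div]
    rw [hlam, e1, e2, max_comm]
  have quasi' : ∀ x : ℝ, m/M ≤ x → x ≤ M/m →
      (1-α) * x ^ (-β) + α * x ^ (1-β) ≤ lam := by
    intro x hx1 hx2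
    rw [hlam']
    exact quasi α β hα0 hα1 hh hx1 hx2
  have hlam1 : (1:ℝ) ≤ lam := by
    have h1 : (m/M:ℝ) ≤ 1 := (div_le_one hM).mpr hmM
    have h2 : (1:ℝ) ≤ M/m := (one_le_div hm).mpr hmM
    have h3 := quasi' 1 h1 h2
    simpa [Real.one_rpow] using h3
  have hlam0 : (0:ℝ) < lam := lt_of_lt_of_le one_pos hlam1
  have hdpos : ∀ i, (0:ℝ) < (1-α) + α * (hC.eigenvalues i)⁻¹ := by
    intro i
    have hx0 : (0:ℝ) < hC.eigenvalues i := hCpos i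
    rcases lt_or_eq_of_le hα1 with h|h
    · have h1 : (0:ℝ) < 1 - α := by linarith
      have h2 : (0:ℝ) ≤ α * (hC.eigenvalues i)⁻¹ := mul_nonneg hα0 (inv_pos.mpr hx0).le
      linarith
    · rw [h]
      simpa using inv_pos.mpr hx0
  -- pointwise facts on the spectrum of C
  have fact1 : ∀ i, 0 ≤ hC.eigenvalues i ^ β
      - lam⁻¹ * ((1-α) + α * hC.eigenvalues i) := by
    intro i
    set x := hC.eigenvalues i with hxdef
    have hx0 : (0:ℝ) < x := hCpos i
    have hxb : (0:ℝ) < x ^ β := Real.rpow_pos_of_pos hx0 β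
    have hpow : x ^ (1-β) = x * x ^ (-β) := by
      rw [show (1:ℝ)-β = 1 + (-β) from by ring, Real.rpow_add hx0, Real.rpow_one]
    have hfx : ((1-α) + α * x) * x ^ (-β) ≤ lam := by
      have h4 := quasi' x (hCl i) (hCu i)
      rw [hpow] at h4
      calc ((1-α) + α * x) * x ^ (-β) = (1-α) * x ^ (-β) + α * (x * x ^ (-β)) := by ring
        _ ≤ lam := h4
    have h3 : x ^ (-β) * x ^ β = 1 := by
      rw [← Real.rpow_add hx0]; simp
    have key : (1-α) + α * x ≤ lam * x ^ β := by
      calc (1-α) + α * x = (((1-α) + α * x) * x ^ (-β)) * x ^ β := by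
            rw [mul_assoc, h3, mul_one]
        _ ≤ lam * x ^ β := mul_le_mul_of_nonneg_right hfx hxb.le
    have h5 := (inv_mul_le_iff₀ hlam0).mpr key
    linarith
  have fact2 : ∀ i, 0 ≤ lam * ((1-α) + α * (hC.eigenvalues i)⁻¹)⁻¹
      - hC.eigenvalues i ^ β := by
    intro i
    have hd0 := hdpos i
    set x := hC.eigenvalues i with hxdef
    have hx0 : (0:ℝ) < x := hCpos i
    have hxi1 : m/M ≤ x⁻¹ := by
      rw [show (m/M:ℝ) = (M/m)⁻¹ from (inv_div M m).symm]
      exact inv_anti₀ hx0 (hCu i)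
    have hxi2 : x⁻¹ ≤ M/m := by
      rw [show (M/m:ℝ) = (m/M)⁻¹ from (inv_div m M).symm]
      exact inv_anti₀ hh (hCl i)
    have e3 : (x⁻¹) ^ (-β) = x ^ β := by
      rw [Real.inv_rpow hx0.le, Real.rpow_neg hx0.le, inv_inv]
    have e4 : (x⁻¹) ^ ((1:ℝ)-β) = x ^ β * x⁻¹ := by
      rw [Real.inv_rpow hx0.le, ← Real.rpow_neg hx0.le,
        show -((1:ℝ)-β) = β + (-1) from by ring, Real.rpow_add hx0, Real.rpow_neg_one]
    have hkey : x ^ β * ((1-α) + α * x⁻¹) ≤ lam := by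
      have h4 := quasi' x⁻¹ hxi1 hxi2
      rw [e3, e4] at h4
      calc x ^ β * ((1-α) + α * x⁻¹) = (1-α) * x ^ β + α * (x ^ β * x⁻¹) := by ring
        _ ≤ lam := h4
    have h5 : x ^ β ≤ lam / ((1-α) + α * x⁻¹) := (le_div_iff₀ hd0).mpr hkey
    rw [div_eq_mul_inv] at h5
    linarith
  -- expressing the three means through `hC.cfc`
  have hGeo : geomMean A B β = S * hC.cfc (fun x => x ^ β) * S := by
    unfold geomMean mpow
    rw [hA'.cfc_eq, hA'.cfc_eq, ← hSdef, ← hTdef, ← hCdef, hC.cfc_eq]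
  have hNab : (1-α) • A + α • B = S * hC.cfc (fun x => (1-α) + α * x) * S := by
    have e : hC.cfc (fun x => (1-α) + α * x)
        = (1-α) • (1 : Matrix (Fin n) (Fin n) ℂ) + α • C := by
      have h1 : hC.cfc (fun x => (1-α) + α * x)
          = (1-α) • (1 : Matrix (Fin n) (Fin n) ℂ) + α • hC.cfc (fun x => x) := by
        rw [mycfc_smul, ← mycfc_const hC (1-α), mycfc_add]
      rwa [mycfc_id hC] at h1
    have e2 : S * ((1-α) • (1 : Matrix (Fin n) (Fin n) ℂ) + α • C) * S
        = (1-α) • (S * 1 * S) + α • (S * C * S) := by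
      rw [mul_add, add_mul, mul_smul_comm, smul_mul_assoc, mul_smul_comm, smul_mul_assoc]
    rw [e, e2, mul_one, hSS, hSCS]
  have key1 : geomMean A B β - lam⁻¹ • ((1-α) • A + α • B)
      = S * hC.cfc (fun x => x ^ β - lam⁻¹ * ((1-α) + α * x)) * S := by
    rw [hGeo, hNab]
    have e : hC.cfc (fun x => x ^ β - lam⁻¹ * ((1-α) + α * x))
        = hC.cfc (fun x => x ^ β) - lam⁻¹ • hC.cfc (fun x => (1-α) + α * x) := by
      rw [mycfc_smul, mycfc_sub]
    rw [e, mul_sub, sub_mul, mul_smul_comm, smul_mul_assoc]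
  have hHsum : (1-α) • A⁻¹ + α • B⁻¹ = T * hC.cfc (fun x => (1-α) + α * x⁻¹) * T := by
    have e : hC.cfc (fun x => (1-α) + α * x⁻¹)
        = (1-α) • (1 : Matrix (Fin n) (Fin n) ℂ) + α • hC.cfc (fun x => x⁻¹) := by
      rw [mycfc_smul, ← mycfc_const hC (1-α), mycfc_add]
    have e2 : T * ((1-α) • (1 : Matrix (Fin n) (Fin n) ℂ) + α • hC.cfc (fun x => x⁻¹)) * T
        = (1-α) • (T * 1 * T) + α • (T * hC.cfc (fun x => x⁻¹) * T) := by
      rw [mul_add, add_mul, mul_smul_comm, smul_mul_assoc, mul_smul_comm, smul_mul_assoc]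
    rw [e, e2, mul_one, ← hAinv, ← hBinv]
  have hHarm : harmMean A B α = S * hC.cfc (fun x => ((1-α) + α * x⁻¹)⁻¹) * S := by
    unfold harmMean
    rw [hHsum]
    apply Matrix.inv_eq_right_inv
    rw [show T * hC.cfc (fun x => (1-α) + α * x⁻¹) * T
          * (S * hC.cfc (fun x => ((1-α) + α * x⁻¹)⁻¹) * S)
        = T * (hC.cfc (fun x => (1-α) + α * x⁻¹)
          * ((T * S) * hC.cfc (fun x => ((1-α) + α * x⁻¹)⁻¹))) * S from by noncomm_ring,
      hTS, one_mul, mycfc_mul,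
      mycfc_congr hC (g := fun _ => 1) (fun i => mul_inv_cancel₀ (hdpos i).ne'),
      mycfc_one, mul_one, hTS]
  have key2 : lam • harmMean A B α - geomMean A B β
      = S * hC.cfc (fun x => lam * ((1-α) + α * x⁻¹)⁻¹ - x ^ β) * S := by
    rw [hHarm, hGeo]
    have e : hC.cfc (fun x => lam * ((1-α) + α * x⁻¹)⁻¹ - x ^ β)
        = lam • hC.cfc (fun x => ((1-α) + α * x⁻¹)⁻¹) - hC.cfc (fun x => x ^ β) := by
      rw [mycfc_smul, mycfc_sub]
    rw [e, mul_sub, sub_mul, mul_smul_comm, smul_mul_assoc]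
  refine ⟨?_, ?_⟩
  · rw [key1]
    have h := (mycfc_psd hC (f := fun x => x ^ β - lam⁻¹ * ((1-α) + α * x)) fact1).mul_mul_conjTranspose_same S
    rwa [hSh.eq] at h
  · rw [key2]
    have h := (mycfc_psd hC (f := fun x => lam * ((1-α) + α * x⁻¹)⁻¹ - x ^ β) fact2).mul_mul_conjTranspose_same S
    rwa [hSh.eq] at h
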